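/- Let β be a standard Borel space, L a positive natural number, ν a probability measure on β, and for each k < L let κ_k be a Markov kernel from the space of partial trajectories (Π_{i : Fin k} β) to β, with ν ≪ κ_k(b_{<k}) almost everywhere under the sequentially composed measure. Let P_L denote the probability measure on Π_{i : Fin L} β obtained by composing κ_0, κ_1, …, κ_{L−1} sequentially (each κ_k conditioned on the first k coordinates), and define the L-period weight w(b) = ∏_{k<L} (dν/dκ_k(b_{<k}))(b_k) using jointly measurable versions of the Radon–Nikodym derivatives. Then for every bounded measurable h : (Π_{i : Fin L} β) → ℝ, ∫ w·h dP_L = ∫ h d(⊗_{i : Fin L} ν), where ⊗_{i : Fin L} ν is the L-fold product of ν. (This is the general-L sequential change-of-measure identity behind the IPW weight w_t(F) = ∏_{t′=t−L+1}^{t} f(W_{t′})/e_{t′}(W_{t′}), equation (9) of the paper.) -/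

import Mathlib

open MeasureTheory ProbabilityTheory

/-- The probability measure on trajectories of length `L` obtained by sequentially
composing the kernels `κ 0, κ 1, …, κ (L-1)`: draw `b 0 ∼ κ 0`, then
`b 1 ∼ κ 1 (b 0)`, and so on. -/
noncomputable def seqComp {β : Type*} [MeasurableSpace β]
    (κ : ∀ k : ℕ, Kernel (∀ _ : Fin k, β) β) [∀ k, IsMarkovKernel (κ k)] :
    (L : ℕ) → Measure (∀ _ : Fin L, β)
  | 0 => Measure.dirac (fun i => i.elim0)
  | (L + 1) =>
      Measure.map (fun p => Fin.snoc p.1 p.2) ((seqComp κ L) ⊗ₘ (κ L))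

section Aux

variable {β : Type*} [MeasurableSpace β]

lemma measurable_snoc' {L : ℕ} :
    Measurable (fun p : (∀ _ : Fin L, β) × β => (Fin.snoc p.1 p.2 : Fin (L+1) → β)) := by
  apply measurable_pi_lambda
  intro i
  refine Fin.lastCases ?_ ?_ i
  · simpa using measurable_snd
  · intro j; simpa using (by exact (measurable_pi_apply j).comp measurable_fst :
      Measurable fun c : (∀ _ : Fin L, β) × β => c.1 j)

instance seqComp_prob (κ : ∀ k : ℕ, Kernel (∀ _ : Fin k, β) β) [∀ k, IsMarkovKernel (κ k)]
    (L : ℕ) : IsProbabilityMeasure (seqComp κ L) := by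
  induction L with
  | zero => rw [seqComp]; infer_instance
  | succ L ih =>
      rw [seqComp]
      exact Measure.isProbabilityMeasure_map measurable_snoc'.aemeasurable

lemma snoc_castLE {L m : ℕ} (hm : m ≤ L) (h : m ≤ L + 1) (a : Fin L → β) (x : β) (i : Fin m) :
    (Fin.snoc a x : Fin (L+1) → β) (Fin.castLE h i) = a (Fin.castLE hm i) := by
  have : Fin.castLE h i = Fin.castSucc (Fin.castLE hm i) := rfl
  rw [this, Fin.snoc_castSucc]

lemma prod_snoc {L : ℕ} (w : ∀ k : ℕ, (∀ _ : Fin k, β) → β → ℝ) (a : ∀ _ : Fin L, β) (x : β) :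
    (∏ k : Fin (L+1), ENNReal.ofReal
        (w k.1 (fun i : Fin k.1 => (Fin.snoc a x : Fin (L+1) → β) (Fin.castLE k.isLt.le i))
          ((Fin.snoc a x : Fin (L+1) → β) k)))
      = (∏ k : Fin L, ENNReal.ofReal
          (w k.1 (fun i : Fin k.1 => a (Fin.castLE k.isLt.le i)) (a k)))
        * ENNReal.ofReal (w L a x) := by
  rw [Fin.prod_univ_castSucc]
  congr 1
  · apply Finset.prod_congr rfl
    intro k _
    have h1 : (fun i : Fin (Fin.castSucc k).1 =>
          (Fin.snoc a x : Fin (L+1) → β) (Fin.castLE (Fin.castSucc k).isLt.le i))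
        = (fun i : Fin k.1 => a (Fin.castLE k.isLt.le i)) := by
      funext i
      exact snoc_castLE k.isLt.le _ a x i
    have h2 : (Fin.snoc a x : Fin (L+1) → β) (Fin.castSucc k) = a k := by simp
    rw [h1, h2]
    rfl
  · show ENNReal.ofReal (w L (fun i : Fin L =>
        (Fin.snoc a x : Fin (L+1) → β) (Fin.castLE (Nat.lt_succ_self L).le i))
        ((Fin.snoc a x : Fin (L+1) → β) (Fin.last L))) = ENNReal.ofReal (w L a x)
    have h1 : (fun i : Fin L =>
          (Fin.snoc a x : Fin (L+1) → β) (Fin.castLE (Nat.lt_succ_self L).le i))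
        = fun i => a i := by
      funext i
      rw [snoc_castLE (le_refl L)]
      rfl
    have h2 : (Fin.snoc a x : Fin (L+1) → β) (Fin.last L) = x := by simp
    rw [h1, h2]

lemma measurable_W {L : ℕ} (w : ∀ k : ℕ, (∀ _ : Fin k, β) → β → ℝ)
    (hw_meas : ∀ k, Measurable (Function.uncurry (w k))) :
    Measurable (fun b : ∀ _ : Fin L, β =>
      ∏ k : Fin L, ENNReal.ofReal (w k.1 (fun i : Fin k.1 => b (Fin.castLE k.isLt.le i)) (b k))) := by
  apply Finset.measurable_prod
  intro k _
  apply ENNReal.measurable_ofReal.comp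
  have hm : Measurable (fun b : ∀ _ : Fin L, β =>
      ((fun i : Fin k.1 => b (Fin.castLE k.isLt.le i), b k) : (∀ _ : Fin k.1, β) × β)) :=
    (measurable_pi_lambda _ fun i => measurable_pi_apply _).prodMk (measurable_pi_apply _)
  exact (hw_meas k.1).comp hm

end Aux

open ENNReal in
lemma key_lintegral {β : Type*} [MeasurableSpace β] [StandardBorelSpace β]
    (ν : Measure β) [IsProbabilityMeasure ν]
    (κ : ∀ k : ℕ, Kernel (∀ _ : Fin k, β) β) [∀ k, IsMarkovKernel (κ k)]
    (w : ∀ k : ℕ, (∀ _ : Fin k, β) → β → ℝ)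
    (hw_meas : ∀ k, Measurable (Function.uncurry (w k))) :
    ∀ L : ℕ,
      (∀ k : Fin L, ∀ᵐ hist ∂(seqComp κ k.1), ν ≪ κ k.1 hist) →
      (∀ k : Fin L, ∀ᵐ hist ∂(seqComp κ k.1),
        (fun b => ENNReal.ofReal (w k.1 hist b)) =ᵐ[κ k.1 hist] ν.rnDeriv (κ k.1 hist)) →
      ∀ f : (∀ _ : Fin L, β) → ℝ≥0∞, Measurable f →
      ∫⁻ b, (∏ k : Fin L, ENNReal.ofReal
          (w k.1 (fun i : Fin k.1 => b (Fin.castLE k.isLt.le i)) (b k))) * f b ∂(seqComp κ L)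
        = ∫⁻ b, f b ∂(Measure.pi fun _ : Fin L => ν) := by
  intro L
  induction L with
  | zero =>
      intro _ _ f hf
      rw [seqComp, Measure.pi_of_empty]
      rw [lintegral_dirac' _ (f := (fun b => (∏ k : Fin 0, ENNReal.ofReal (w k.1 (fun i : Fin k.1 => b (Fin.castLE k.isLt.le i)) (b k))) * f b)) ((measurable_W w hw_meas).mul hf), lintegral_dirac' _ hf]
      have he : (fun i : Fin 0 => i.elim0 : ∀ _ : Fin 0, β) = isEmptyElim := by
        funext i; exact i.elim0
      simp [he]
  | succ L ih =>
      intro hac hw f hf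
      have hacL : ∀ᵐ hist ∂(seqComp κ L), ν ≪ κ L hist := hac (Fin.last L)
      have hwL : ∀ᵐ hist ∂(seqComp κ L),
          (fun b => ENNReal.ofReal (w L hist b)) =ᵐ[κ L hist] ν.rnDeriv (κ L hist) :=
        hw (Fin.last L)
      -- measurability facts
      have hWsucc := measurable_W (L := L + 1) w hw_meas
      have hWL := measurable_W (L := L) w hw_meas
      have hfs : Measurable (fun p : (∀ _ : Fin L, β) × β =>
          f (Fin.snoc p.1 p.2)) := hf.comp measurable_snoc'
      have hwLm : Measurable (fun p : (∀ _ : Fin L, β) × β =>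
          ENNReal.ofReal (w L p.1 p.2)) :=
        ENNReal.measurable_ofReal.comp (hw_meas L)
      rw [seqComp]
      rw [lintegral_map (f := (fun b => (∏ k : Fin (L+1), ENNReal.ofReal (w k.1 (fun i : Fin k.1 => b (Fin.castLE k.isLt.le i)) (b k))) * f b)) (hWsucc.mul hf) measurable_snoc']
      have hG : Measurable (fun p : (∀ _ : Fin L, β) × β =>
          (∏ k : Fin (L+1), ENNReal.ofReal
            (w k.1 (fun i : Fin k.1 => (Fin.snoc p.1 p.2 : Fin (L+1) → β) (Fin.castLE k.isLt.le i))
              ((Fin.snoc p.1 p.2 : Fin (L+1) → β) k))) * f (Fin.snoc p.1 p.2)) :=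
        (hWsucc.mul hf).comp measurable_snoc'
      rw [Measure.lintegral_compProd hG]
      -- pointwise rewrite of the weight product
      have hptwise : ∀ a : ∀ _ : Fin L, β, ∀ x : β,
          (∏ k : Fin (L+1), ENNReal.ofReal
            (w k.1 (fun i : Fin k.1 => (Fin.snoc a x : Fin (L+1) → β) (Fin.castLE k.isLt.le i))
              ((Fin.snoc a x : Fin (L+1) → β) k))) * f (Fin.snoc a x)
          = (∏ k : Fin L, ENNReal.ofReal
              (w k.1 (fun i : Fin k.1 => a (Fin.castLE k.isLt.le i)) (a k)))
            * (ENNReal.ofReal (w L a x) * f (Fin.snoc a x)) := by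
        intro a x
        rw [prod_snoc w a x, mul_assoc]
      have step1 : ∫⁻ a, ∫⁻ x,
            (∏ k : Fin (L+1), ENNReal.ofReal
              (w k.1 (fun i : Fin k.1 => (Fin.snoc a x : Fin (L+1) → β) (Fin.castLE k.isLt.le i))
                ((Fin.snoc a x : Fin (L+1) → β) k))) * f (Fin.snoc a x) ∂(κ L a) ∂(seqComp κ L)
          = ∫⁻ a, (∏ k : Fin L, ENNReal.ofReal
              (w k.1 (fun i : Fin k.1 => a (Fin.castLE k.isLt.le i)) (a k)))
              * ∫⁻ x, f (Fin.snoc a x) ∂ν ∂(seqComp κ L) := by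
        apply lintegral_congr_ae
        filter_upwards [hacL, hwL] with a hac_a hw_a
        simp only [hptwise a]
        have hmx : Measurable (fun x : β => ENNReal.ofReal (w L a x) * f (Fin.snoc a x)) :=
          (ENNReal.measurable_ofReal.comp ((hw_meas L).comp measurable_prodMk_left)).mul
            (hf.comp (measurable_snoc'.comp measurable_prodMk_left))
        rw [lintegral_const_mul _ hmx]
        congr 1
        calc ∫⁻ x, ENNReal.ofReal (w L a x) * f (Fin.snoc a x) ∂(κ L a)
            = ∫⁻ x, ν.rnDeriv (κ L a) x * f (Fin.snoc a x) ∂(κ L a) := by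
              apply lintegral_congr_ae
              filter_upwards [hw_a] with x hx
              rw [hx]
          _ = ∫⁻ x, f (Fin.snoc a x) ∂ν := by
              exact lintegral_rnDeriv_mul hac_a
                ((hf.comp (measurable_snoc'.comp measurable_prodMk_left)).aemeasurable)
      rw [step1]
      have hg : Measurable (fun a : ∀ _ : Fin L, β => ∫⁻ x, f (Fin.snoc a x) ∂ν) :=
        Measurable.lintegral_prod_right' hfs
      rw [ih (fun k => hac k.castSucc) (fun k => hw k.castSucc) _ hg]
      -- now identify with the (L+1)-fold product measure
      have hmp := (measurePreserving_piFinSuccAbove (fun _ : Fin (L+1) => ν) (Fin.last L)).symm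
      rw [← hmp.lintegral_comp hf]
      have he : ∀ q : β × (∀ _ : Fin L, β),
          (MeasurableEquiv.piFinSuccAbove (fun _ : Fin (L+1) => β) (Fin.last L)).symm q
            = Fin.snoc q.2 q.1 := by
        intro q
        simp [MeasurableEquiv.piFinSuccAbove, Fin.insertNthEquiv, Fin.insertNth_last']
      simp only [he]
      have hswap : Measurable (fun q : β × (∀ _ : Fin L, β) => f (Fin.snoc q.2 q.1)) :=
        hf.comp (measurable_snoc'.comp measurable_swap)
      rw [lintegral_prod _ hswap.aemeasurable]
      have hunc : AEMeasurable (Function.uncurry fun (b : ∀ _ : Fin L, β) (x : β) =>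
          f (Fin.snoc b x)) ((Measure.pi fun _ : Fin L => ν).prod ν) :=
        (hf.comp measurable_snoc').aemeasurable
      exact lintegral_lintegral_swap hunc

/-- General-`L` sequential change-of-measure identity: integrating the product of the
`L` period-by-period importance weights against a bounded measurable `h` under the
sequentially composed observed measure equals the integral of `h` under the `L`-fold
product of the intervention measure `ν`. -/
theorem stmt_5
    {β : Type*} [MeasurableSpace β] [StandardBorelSpace β]
    (L : ℕ) (hL : 0 < L)
    (ν : Measure β) [IsProbabilityMeasure ν]
    (κ : ∀ k : ℕ, Kernel (∀ _ : Fin k, β) β) [∀ k, IsMarkovKernel (κ k)]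
    (hac : ∀ k : Fin L, ∀ᵐ hist ∂(seqComp κ k.1), ν ≪ κ k.1 hist)
    (w : ∀ k : ℕ, (∀ _ : Fin k, β) → β → ℝ)
    (hw_meas : ∀ k, Measurable (Function.uncurry (w k)))
    (hw_nonneg : ∀ k hist b, 0 ≤ w k hist b)
    (hw : ∀ k : Fin L, ∀ᵐ hist ∂(seqComp κ k.1),
      (fun b => ENNReal.ofReal (w k.1 hist b)) =ᵐ[κ k.1 hist] ν.rnDeriv (κ k.1 hist))
    (h : (∀ _ : Fin L, β) → ℝ) (hh_meas : Measurable h) (Ch : ℝ)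
    (hh_bdd : ∀ b, |h b| ≤ Ch) :
    ∫ b, (∏ k : Fin L, w k.1 (fun i : Fin k.1 => b (Fin.castLE k.isLt.le i)) (b k)) * h b
        ∂(seqComp κ L)
      = ∫ b, h b ∂(Measure.pi fun _ : Fin L => ν) := by
  have hW_meas : Measurable (fun b : ∀ _ : Fin L, β =>
      ∏ k : Fin L, w k.1 (fun i : Fin k.1 => b (Fin.castLE k.isLt.le i)) (b k)) := by
    apply Finset.measurable_prod
    intro k _
    have hm : Measurable (fun b : ∀ _ : Fin L, β =>
        ((fun i : Fin k.1 => b (Fin.castLE k.isLt.le i), b k) : (∀ _ : Fin k.1, β) × β)) :=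
      (measurable_pi_lambda _ fun i => measurable_pi_apply _).prodMk (measurable_pi_apply _)
    exact (hw_meas k.1).comp hm
  set W := fun b : ∀ _ : Fin L, β =>
    ∏ k : Fin L, w k.1 (fun i : Fin k.1 => b (Fin.castLE k.isLt.le i)) (b k) with hWdef
  have hW_nonneg : ∀ b, 0 ≤ W b := fun b => Finset.prod_nonneg fun k _ => hw_nonneg _ _ _
  have key := key_lintegral ν κ w hw_meas L hac hw
  have hdens : (seqComp κ L).withDensity (fun b => ENNReal.ofReal (W b))
      = Measure.pi fun _ : Fin L => ν := by
    ext s hs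
    rw [withDensity_apply _ hs]
    have hkey := key (s.indicator 1) (measurable_one.indicator hs)
    rw [lintegral_indicator_one hs] at hkey
    calc ∫⁻ b in s, ENNReal.ofReal (W b) ∂(seqComp κ L)
        = ∫⁻ b in s, (∏ k : Fin L, ENNReal.ofReal
            (w k.1 (fun i : Fin k.1 => b (Fin.castLE k.isLt.le i)) (b k))) ∂(seqComp κ L) := by
          apply lintegral_congr
          intro b
          exact ENNReal.ofReal_prod_of_nonneg (fun k _ => hw_nonneg _ _ _)
      _ = ∫⁻ b, s.indicator (fun b => ∏ k : Fin L, ENNReal.ofReal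
            (w k.1 (fun i : Fin k.1 => b (Fin.castLE k.isLt.le i)) (b k))) b ∂(seqComp κ L) :=
          (lintegral_indicator hs _).symm
      _ = ∫⁻ b, (∏ k : Fin L, ENNReal.ofReal
            (w k.1 (fun i : Fin k.1 => b (Fin.castLE k.isLt.le i)) (b k)))
            * s.indicator 1 b ∂(seqComp κ L) := by
          apply lintegral_congr
          intro b
          by_cases hb : b ∈ s <;> simp [hb]
      _ = (Measure.pi fun _ : Fin L => ν) s := hkey
  have hWnn : Measurable fun b => Real.toNNReal (W b) := hW_meas.real_toNNReal
  calc ∫ b, W b * h b ∂(seqComp κ L)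
      = ∫ b, Real.toNNReal (W b) • h b ∂(seqComp κ L) := by
        apply integral_congr_ae
        filter_upwards with b
        rw [NNReal.smul_def, Real.coe_toNNReal _ (hW_nonneg b), smul_eq_mul]
    _ = ∫ b, h b ∂((seqComp κ L).withDensity fun b => ((Real.toNNReal (W b) : NNReal) : ENNReal)) :=
        (integral_withDensity_eq_integral_smul hWnn h).symm
    _ = ∫ b, h b ∂(Measure.pi fun _ : Fin L => ν) := by
        rw [show (fun b => ((Real.toNNReal (W b) : NNReal) : ENNReal))
            = fun b => ENNReal.ofReal (W b) from rfl, hdens]
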